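/- Let a ≥ 2, p a prime with p ∤ a, and let e ≥ 1. Setting m = p^e · o_p(a), the prime p divides Φ_m(a). (Converse direction: every m of this form gives p | Φ_m(a).) -/
import Mathlib

/-- For `a ≥ 2`, `p` prime with `p ∤ a`, and `e ≥ 1`, setting
`m = p ^ e * o_p(a)` one has `p ∣ Φ_m(a)`. -/
theorem prime_dvd_cyclotomic_eval_pow_mul_orderOf
    (a : ℤ) (ha : 2 ≤ a) (p : ℕ) (hp : p.Prime) (hpa : ¬ (p : ℤ) ∣ a)
    (e : ℕ) (he : 1 ≤ e) :
    (p : ℤ) ∣ (Polynomial.cyclotomic (p ^ e * orderOf ((a : ZMod p))) ℤ).eval a := by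
  haveI : Fact p.Prime := ⟨hp⟩
  set d := orderOf ((a : ZMod p)) with hd
  have ha0 : (a : ZMod p) ≠ 0 := by
    rwa [Ne, ZMod.intCast_zmod_eq_zero_iff_dvd]
  have hpow : (a : ZMod p) ^ (p - 1) = 1 := ZMod.pow_card_sub_one_eq_one ha0
  have hdvd : d ∣ p - 1 := orderOf_dvd_of_pow_eq_one hpow
  have hdpos : 0 < d := by
    rcases Nat.eq_zero_or_pos d with h | h
    · rw [hd] at h
      have := orderOf_eq_zero_iff.mp h
      exact absurd (isOfFinOrder_iff_pow_eq_one.mpr ⟨p - 1, Nat.sub_pos_of_lt hp.one_lt, hpow⟩) this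
    · exact h
  have hplt : d < p := lt_of_le_of_lt (Nat.le_of_dvd (Nat.sub_pos_of_lt hp.one_lt) hdvd)
    (Nat.sub_lt hp.pos one_pos)
  haveI : NeZero ((d : ZMod p)) := ⟨by
    rw [Ne, ZMod.natCast_eq_zero_iff]
    exact fun h => absurd (Nat.le_of_dvd hdpos h) (not_le.mpr hplt)⟩
  rw [← ZMod.intCast_zmod_eq_zero_iff_dvd]
  have key : (((Polynomial.cyclotomic (p ^ e * d) ℤ).eval a : ℤ) : ZMod p)
      = (Polynomial.cyclotomic (p ^ e * d) (ZMod p)).eval ((a : ZMod p)) := by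
    rw [← Polynomial.map_cyclotomic_int (p ^ e * d) (ZMod p),
      Polynomial.eval_intCast_map]
    simp
  rw [key]
  have hroot : (Polynomial.cyclotomic (p ^ e * d) (ZMod p)).IsRoot ((a : ZMod p)) := by
    rw [Polynomial.isRoot_cyclotomic_prime_pow_mul_iff_of_charP]
    exact IsPrimitiveRoot.orderOf _
  exact hroot
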